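/- Let C be an o-symmetric convex disk in ℝ² and let x, y ∈ ℝ² with ‖x−y‖_C ≤ 2. Then the C-spindle [x,y]_C is the intersection of at most two translates of C; moreover, if [x,y]_C is itself a translate of C, then ‖x−y‖_C = 2. -/

import Mathlib

open Set

noncomputable section

/-- The plane. -/
abbrev P2 := ℝ × ℝ

/-- The translate of `C` by the vector `x`. -/
def tr (C : Set P2) (x : P2) : Set P2 := (x + ·) '' C

/-- The `C`-spindle of `p` and `q`: the intersection of all translates of `C` containing both
`p` and `q` (equal to all of `ℝ²` if there is no such translate). -/
def spindle (C : Set P2) (p q : P2) : Set P2 :=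
  ⋂ x ∈ {x : P2 | p ∈ tr C x ∧ q ∈ tr C x}, tr C x

/-- `K` is `C`-(spindle) convex. -/
def CConvexSet (C K : Set P2) : Prop := ∀ p ∈ K, ∀ q ∈ K, spindle C p q ⊆ K

/-- `C` is an `o`-symmetric convex disk: compact, convex, with nonempty interior,
symmetric about the origin. -/
def SymDisk (C : Set P2) : Prop :=
  IsCompact C ∧ Convex ℝ C ∧ (interior C).Nonempty ∧ ∀ x ∈ C, -x ∈ C

/-- A convex body (convex disk) in the plane. -/
def ConvBody (K : Set P2) : Prop := IsCompact K ∧ Convex ℝ K ∧ (interior K).Nonempty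

/-- Cross product (orientation determinant) of two plane vectors. -/
def detv (a b : P2) : ℝ := a.1 * b.2 - a.2 * b.1

/-- A (cyclic) list of points is in (weak) counterclockwise convex position order. -/
def InConvexOrder {m : ℕ} (v : Fin m → P2) : Prop :=
  ∀ i j k : Fin m, i < j → j < k → 0 ≤ detv (v j - v i) (v k - v i)

/-- The `C`-perimeter of a set `K`: the supremum of the `C`-perimeters of convex polygons
inscribed in `K`, a polygon being given by a closed cyclic sequence of vertices in
counterclockwise convex position, with side lengths measured by the gauge (Minkowski
functional) of `C`. -/
def CPerim (C K : Set P2) : ℝ :=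
  sSup {s | ∃ m : ℕ, ∃ v : Fin (m + 1) → P2, (∀ i, v i ∈ K) ∧ InConvexOrder v ∧
    v (Fin.last m) = v 0 ∧ s = ∑ i : Fin m, gauge C (v i.succ - v i.castSucc)}

/-- The `C`-length of a curve `γ : [0,1] → ℝ²`: supremum of inscribed polygonal
`‖·‖_C`-lengths. -/
def CLength (C : Set P2) (γ : ℝ → P2) : ℝ :=
  sSup {s | ∃ n : ℕ, ∃ t : Fin (n + 1) → ℝ, Monotone t ∧ t 0 = 0 ∧ t (Fin.last n) = 1 ∧
    s = ∑ i : Fin n, gauge C (γ (t i.succ) - γ (t i.castSucc))}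

/-- The set of `C`-lengths of arcs joining `x` and `y` contained in the boundary of some
translate of `C`. -/
def arcSet (C : Set P2) (x y : P2) : Set ℝ :=
  {s | ∃ z : P2, ∃ γ : ℝ → P2, ContinuousOn γ (Icc 0 1) ∧ γ 0 = x ∧ γ 1 = y ∧
    γ '' Icc 0 1 ⊆ frontier (tr C z) ∧ s = CLength C γ}

/-- The `C`-arc-distance of `x` and `y`. -/
def arcDist (C : Set P2) (x y : P2) : ℝ := sInf (arcSet C x y)

/-- The `C`-convex hull of `X`: the intersection of all translates of `C` containing `X`. -/
def convC (C X : Set P2) : Set P2 := ⋂ x ∈ {x : P2 | X ⊆ tr C x}, tr C x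

/-- `Q` is a `C`-`n`-gon: an intersection of `n` translates of `C`. -/
def Cngon (C : Set P2) (n : ℕ) (Q : Set P2) : Prop :=
  ∃ x : Fin n → P2, Q = ⋂ i, tr C (x i)

/-- `K` is an intersection of translates of `C`. -/
def IsCIntersection (C K : Set P2) : Prop := ∃ T : Set P2, K = ⋂ x ∈ T, tr C x

/-- `â_n^C(K)`: the supremum of the areas of `C`-`n`-gons inscribed in `K`. -/
def ahat (C : Set P2) (n : ℕ) (K : Set P2) : ℝ :=
  sSup {s | ∃ Q : Set P2, Cngon C n Q ∧ Q ⊆ K ∧ s = (MeasureTheory.volume Q).toReal}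

/-- `Â_n^C(K)`: the infimum of the areas of `C`-`n`-gons circumscribed about `K`. -/
def Ahat (C : Set P2) (n : ℕ) (K : Set P2) : ℝ :=
  sInf {s | ∃ Q : Set P2, Cngon C n Q ∧ K ⊆ Q ∧ s = (MeasureTheory.volume Q).toReal}

/-- `p̂_n^C(K)`: the supremum of the `C`-perimeters of `C`-`n`-gons inscribed in `K`. -/
def phat (C : Set P2) (n : ℕ) (K : Set P2) : ℝ :=
  sSup {s | ∃ Q : Set P2, Cngon C n Q ∧ Q ⊆ K ∧ s = CPerim C Q}

/-- `P̂_n^C(K)`: the infimum of the `C`-perimeters of `C`-`n`-gons circumscribed about `K`. -/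
def Phat (C : Set P2) (n : ℕ) (K : Set P2) : ℝ :=
  sInf {s | ∃ Q : Set P2, Cngon C n Q ∧ K ⊆ Q ∧ s = CPerim C Q}

end
lemma mem_tr {C : Set P2} {z p : P2} : p ∈ tr C z ↔ p - z ∈ C := by
  constructor
  · rintro ⟨c, hc, rfl⟩; simpa using hc
  · intro h; exact ⟨p - z, h, by ring⟩

lemma zero_interior {C : Set P2} (hC : SymDisk C) : (0 : P2) ∈ interior C := by
  obtain ⟨p, hp⟩ := hC.2.2.1
  have hm : -p ∈ C := hC.2.2.2 _ (interior_subset hp)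
  have := hC.2.1.combo_interior_closure_mem_interior hp (subset_closure hm)
    (by norm_num : (0:ℝ) < 1/2) (by norm_num : (0:ℝ) ≤ 1/2) (by norm_num)
  simpa using this

lemma zero_mem {C : Set P2} (hC : SymDisk C) : (0 : P2) ∈ C :=
  interior_subset (zero_interior hC)

lemma absorbentC {C : Set P2} (hC : SymDisk C) : Absorbent ℝ C :=
  absorbent_nhds_zero (mem_nhds_iff.2 ⟨interior C, interior_subset, isOpen_interior,
    zero_interior hC⟩)

lemma half_mem {C : Set P2} (hC : SymDisk C) {v : P2} (h : gauge C v ≤ 2) :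
    (2⁻¹ : ℝ) • v ∈ C := by
  have hg : gauge C ((2⁻¹ : ℝ) • v) ≤ 1 := by
    rw [gauge_smul_of_nonneg (by norm_num : (0:ℝ) ≤ 2⁻¹)]
    simp only [smul_eq_mul]
    linarith
  have hmem : ∀ n : ℕ, (1 - 1/((n:ℝ)+1)) • ((2⁻¹ : ℝ) • v) ∈ C := by
    intro n
    have h1 : (0:ℝ) < 1/((n:ℝ)+1) := by positivity
    have h2 : 1/((n:ℝ)+1) ≤ 1 := by
      rw [div_le_one (by positivity)]; linarith [Nat.cast_nonneg (α := ℝ) n]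
    have hθ : (0:ℝ) ≤ 1 - 1/((n:ℝ)+1) := by linarith
    have : gauge C ((1 - 1/((n:ℝ)+1)) • ((2⁻¹ : ℝ) • v)) < 1 := by
      rw [gauge_smul_of_nonneg hθ]
      simp only [smul_eq_mul]
      nlinarith [gauge_nonneg (s := C) ((2⁻¹ : ℝ) • v)]
    exact gauge_lt_one_subset_self hC.2.1 (zero_mem hC) (absorbentC hC) this
  have htend : Filter.Tendsto (fun n : ℕ => (1 - 1/((n:ℝ)+1)) • ((2⁻¹ : ℝ) • v))
      Filter.atTop (nhds ((2⁻¹ : ℝ) • v)) := by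
    have h1 : Filter.Tendsto (fun n : ℕ => (1 - 1/((n:ℝ)+1))) Filter.atTop (nhds 1) := by
      have := tendsto_one_div_add_atTop_nhds_zero_nat (𝕜 := ℝ)
      have h2 := Filter.Tendsto.const_sub (1:ℝ) this
      simpa using h2
    have := h1.smul_const ((2⁻¹ : ℝ) • v)
    simpa using this
  exact hC.1.isClosed.mem_of_tendsto htend (Filter.Eventually.of_forall hmem)

lemma half_mem_interior {C : Set P2} (hC : SymDisk C) {v : P2} (h : gauge C v < 2) :
    (2⁻¹ : ℝ) • v ∈ interior C := by
  have hg : gauge C ((2⁻¹ : ℝ) • v) < 1 := by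
    rw [gauge_smul_of_nonneg (by norm_num : (0:ℝ) ≤ 2⁻¹)]
    simp only [smul_eq_mul]
    linarith
  obtain ⟨b, hb0, hb1, c, hc, hbc⟩ := exists_lt_of_gauge_lt (absorbentC hC) hg
  have := hC.2.1.combo_interior_closure_mem_interior (zero_interior hC) (subset_closure hc)
    (by linarith : (0:ℝ) < 1 - b) hb0.le (by ring)
  rw [← hbc]
  simpa using this

lemma tr_subset_eq {C : Set P2} (hCc : IsCompact C) (hne : C.Nonempty) {z z' : P2}
    (h : tr C z ⊆ tr C z') : z = z' := by
  have hsub : ∀ c ∈ C, c - (z' - z) ∈ C := by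
    intro c hc
    have : z + c ∈ tr C z' := h ⟨c, hc, rfl⟩
    rw [mem_tr] at this
    convert this using 1
    ring
  set v := z' - z with hv
  have hcont : Continuous (fun c : P2 => v.1 * c.1 + v.2 * c.2) := by continuity
  obtain ⟨c₀, hc₀, hmin⟩ := hCc.exists_isMinOn hne hcont.continuousOn
  have h1 : v.1 * c₀.1 + v.2 * c₀.2 ≤ v.1 * (c₀.1 - v.1) + v.2 * (c₀.2 - v.2) :=
    hmin (hsub c₀ hc₀)
  have hz : v.1 ^ 2 + v.2 ^ 2 ≤ 0 := by nlinarith [h1]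
  have h1' : v.1 = 0 := by nlinarith [sq_nonneg v.1, sq_nonneg v.2]
  have h2' : v.2 = 0 := by nlinarith [sq_nonneg v.1, sq_nonneg v.2]
  have : v = 0 := Prod.ext h1' h2'
  rw [hv] at this
  have := sub_eq_zero.1 this
  exact this.symm

lemma negpair {K : Set P2} (hKs : ∀ c ∈ K, -c ∈ K) {a b a' b' : ℝ}
    (h : (a, b) ∈ K) (ha : a' = -a) (hb : b' = -b) : (a', b') ∈ K := by
  subst ha; subst hb; simpa using hKs _ h

noncomputable def kslice (K : Set P2) (t : ℝ) : Set ℝ := Prod.fst '' (K ∩ {c | c.2 = t})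

lemma mem_kslice {K : Set P2} {s t : ℝ} : s ∈ kslice K t ↔ (s, t) ∈ K := by
  constructor
  · rintro ⟨c, ⟨hc, hc2⟩, rfl⟩; rwa [show (c.1, t) = c from Prod.ext rfl hc2.symm]
  · intro h; exact ⟨(s, t), ⟨h, rfl⟩, rfl⟩

lemma kslice_compact {K : Set P2} (hKc : IsCompact K) (t : ℝ) : IsCompact (kslice K t) :=
  (hKc.inter_right (isClosed_eq continuous_snd continuous_const)).image continuous_fst

lemma slice_mem_between {K : Set P2} (hKv : Convex ℝ K) {s₁ s₂ s t : ℝ} (h₁ : (s₁, t) ∈ K)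
    (h₂ : (s₂, t) ∈ K) (hl : s₁ ≤ s) (hr : s ≤ s₂) : (s, t) ∈ K := by
  rcases eq_or_lt_of_le (hl.trans hr) with h | h
  · have : s = s₁ := le_antisymm (h ▸ hr) hl
    rwa [this]
  · have hd : (0:ℝ) < s₂ - s₁ := by linarith
    have ha : (0:ℝ) ≤ (s₂ - s) / (s₂ - s₁) := by apply div_nonneg <;> linarith
    have hb : (0:ℝ) ≤ (s - s₁) / (s₂ - s₁) := by apply div_nonneg <;> linarith
    have hab : (s₂ - s) / (s₂ - s₁) + (s - s₁) / (s₂ - s₁) = 1 := by field_simp; ring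
    have := hKv h₁ h₂ ha hb hab
    convert this using 1
    apply Prod.ext
    · simp only [Prod.fst_add, Prod.smul_fst, smul_eq_mul]
      field_simp; ring
    · simp only [Prod.snd_add, Prod.smul_snd, smul_eq_mul]
      field_simp; ring

lemma main_K {K : Set P2} (hKc : IsCompact K) (hKv : Convex ℝ K)
    (hKs : ∀ c ∈ K, -c ∈ K) (h0 : ((1:ℝ)/2, (0:ℝ)) ∈ K) :
    ∃ ζ₁ ζ₂ : P2, (ζ₁ ∈ K ∧ ζ₁ + (1, 0) ∈ K) ∧ (ζ₂ ∈ K ∧ ζ₂ + (1, 0) ∈ K) ∧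
      ∀ κ : P2, κ - ζ₁ ∈ K → κ - ζ₂ ∈ K → ∀ ζ ∈ K, ζ + (1, 0) ∈ K → κ - ζ ∈ K := by
  classical
  have h0' : ((-(1/2) : ℝ), (0:ℝ)) ∈ K := negpair hKs h0 (by ring) (by ring)
  set Im : Set ℝ := Prod.snd '' K with hIm
  have hImc : IsCompact Im := hKc.image continuous_snd
  have hImv : Convex ℝ Im := by
    rintro t₁ ⟨c₁, h₁, rfl⟩ t₂ ⟨c₂, h₂, rfl⟩ a b ha hb hab
    exact ⟨_, hKv h₁ h₂ ha hb hab, rfl⟩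
  set Tm := sSup Im with hTmdef
  have hImne : Im.Nonempty := ⟨0, (1/2, 0), h0, rfl⟩
  have hTmem : Tm ∈ Im := hImc.sSup_mem hImne
  have hTle : ∀ c ∈ K, |c.2| ≤ Tm := by
    intro c hc
    rw [abs_le]
    constructor
    · have : (-c).2 ≤ Tm := le_csSup hImc.bddAbove ⟨-c, hKs c hc, rfl⟩
      simpa using neg_le_neg this |>.trans_eq (by simp)
    · exact le_csSup hImc.bddAbove ⟨c, hc, rfl⟩
  have hTm0 : 0 ≤ Tm := by
    have := hTle _ h0; simpa using this
  have hslice_ne : ∀ t : ℝ, |t| ≤ Tm → (kslice K t).Nonempty := by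
    intro t ht
    have hm : -Tm ∈ Im := by
      obtain ⟨c, hc, hc2⟩ := hTmem
      exact ⟨-c, hKs c hc, by simp [hc2]⟩
    have : t ∈ Im := hImv.ordConnected.out hm hTmem ⟨(abs_le.1 ht).1, (abs_le.1 ht).2⟩
    obtain ⟨c, hc, rfl⟩ := this
    exact ⟨c.1, mem_kslice.2 (by rwa [show (c.1, c.2) = c from rfl])⟩
  set β : ℝ → ℝ := fun t => sSup (kslice K t) with hβdef
  set α : ℝ → ℝ := fun t => sInf (kslice K t) with hαdef
  have hβmem : ∀ t, |t| ≤ Tm → (β t, t) ∈ K := fun t ht =>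
    mem_kslice.1 ((kslice_compact hKc t).sSup_mem (hslice_ne t ht))
  have hαmem : ∀ t, |t| ≤ Tm → (α t, t) ∈ K := fun t ht =>
    mem_kslice.1 ((kslice_compact hKc t).sInf_mem (hslice_ne t ht))
  have hβle : ∀ s t, (s, t) ∈ K → s ≤ β t := fun s t h =>
    le_csSup (kslice_compact hKc t).bddAbove (mem_kslice.2 h)
  have hαle : ∀ s t, (s, t) ∈ K → α t ≤ s := fun s t h =>
    csInf_le (kslice_compact hKc t).bddBelow (mem_kslice.2 h)
  have hαβ : ∀ t, |t| ≤ Tm → α t = -β (-t) := by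
    intro t ht
    have ht' : |(-t)| ≤ Tm := by rwa [abs_neg]
    apply le_antisymm
    · exact hαle _ _ (negpair hKs (hβmem _ ht') rfl (by ring))
    · have : -α t ≤ β (-t) := hβle _ _ (negpair hKs (hαmem _ ht) rfl rfl)
      linarith
  have hconc : ∀ t₁ t₂ a b : ℝ, |t₁| ≤ Tm → |t₂| ≤ Tm → 0 ≤ a → 0 ≤ b → a + b = 1 →
      a * β t₁ + b * β t₂ ≤ β (a * t₁ + b * t₂) := by
    intro t₁ t₂ a b h₁ h₂ ha hb hab
    have hm := hKv (hβmem t₁ h₁) (hβmem t₂ h₂) ha hb hab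
    have he : a • ((β t₁ : ℝ), t₁) + b • ((β t₂ : ℝ), t₂)
        = ((a * β t₁ + b * β t₂ : ℝ), (a * t₁ + b * t₂ : ℝ)) := by
      simp [Prod.ext_iff]
    rw [he] at hm
    exact hβle _ _ hm
  have hfour : ∀ u v p q : ℝ, |u| ≤ Tm → |v| ≤ Tm → u ≤ p → p ≤ v → u ≤ q → q ≤ v →
      p + q = u + v → β u + β v ≤ β p + β q := by
    intro u v p q hu hv hup hpv huq hqv hsum
    rcases eq_or_lt_of_le (hup.trans hpv) with h | h
    · have hpu : p = u := le_antisymm (h ▸ hpv) hup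
      have hqu : q = u := le_antisymm (h ▸ hqv) huq
      have hvu : v = u := by linarith
      rw [hpu, hqu, hvu]
    · have hd : (0:ℝ) < v - u := by linarith
      have ha : 0 ≤ (v - p) / (v - u) := by apply div_nonneg <;> linarith
      have hb : 0 ≤ (p - u) / (v - u) := by apply div_nonneg <;> linarith
      have hab : (v - p) / (v - u) + (p - u) / (v - u) = 1 := by field_simp; ring
      have h1 := hconc u v _ _ hu hv ha hb hab
      have h2 := hconc u v _ _ hu hv hb ha (by linarith)
      have e1 : (v - p) / (v - u) * u + (p - u) / (v - u) * v = p := by field_simp; ring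
      have e2 : (p - u) / (v - u) * u + (v - p) / (v - u) * v = q := by
        have hq : q = u + v - p := by linarith
        rw [hq]; field_simp; ring
      rw [e1] at h1; rw [e2] at h2
      have hs2 := add_le_add h1 h2
      have he : ((v - p) / (v - u) * β u + (p - u) / (v - u) * β v)
          + ((p - u) / (v - u) * β u + (v - p) / (v - u) * β v) = β u + β v := by
        linear_combination (β u + β v) * hab
      linarith [he ▸ hs2]
  clear_value β α Tm Im
  clear hβdef hαdef hTmdef hIm hImc hImv hImne hTmem
  set S' : Set ℝ := {t : ℝ | ∃ s, (s, t) ∈ K ∧ (s + 1, t) ∈ K} with hS'def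
  have hS'c : IsCompact S' := by
    have hrw : S' = Prod.snd '' (K ∩ (· + ((1:ℝ), (0:ℝ))) ⁻¹' K) := by
      ext t
      constructor
      · rintro ⟨s, h1, h2⟩
        refine ⟨(s, t), ⟨h1, ?_⟩, rfl⟩
        show (s, t) + (1, 0) ∈ K
        simpa using h2
      · rintro ⟨c, ⟨h1, h2⟩, rfl⟩
        refine ⟨c.1, by rwa [show (c.1, c.2) = c from rfl], ?_⟩
        have h3 : c + (1, 0) = (c.1 + 1, c.2) := Prod.ext (by simp) (by simp)
        have : c + (1, 0) ∈ K := h2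
        rwa [h3] at this
    rw [hrw]
    exact ((hKc.inter_right ((hKc.isClosed).preimage (continuous_add_right _))).image continuous_snd)
  have h0S : (0:ℝ) ∈ S' := ⟨-(1/2), h0', by norm_num; exact h0⟩
  have hS'ne : S'.Nonempty := ⟨0, h0S⟩
  set e := sSup S' with hedef
  have heS : e ∈ S' := hS'c.sSup_mem hS'ne
  have he0 : 0 ≤ e := le_csSup hS'c.bddAbove h0S
  have hS'le : ∀ t ∈ S', -e ≤ t ∧ t ≤ e := by
    intro t ht
    obtain ⟨s, h1, h2⟩ := ht
    constructor
    · have hneg : -t ∈ S' := ⟨-1 - s, negpair hKs h2 (by ring) rfl, negpair hKs h1 (by ring) rfl⟩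
      have := le_csSup hS'c.bddAbove hneg
      linarith
    · exact le_csSup hS'c.bddAbove ⟨s, h1, h2⟩
  clear_value e
  clear hedef
  obtain ⟨s₀, hs₀, hs₀1⟩ := heS
  have heT : |e| ≤ Tm := hTle _ hs₀
  have heT' : e ≤ Tm := (abs_le.1 heT).2
  have hβe : (β e, e) ∈ K := hβmem e heT
  have hs₀b : s₀ + 1 ≤ β e := hβle _ _ hs₀1
  have hβe1 : (β e - 1, e) ∈ K := slice_mem_between hKv hs₀ hβe (by linarith) (by linarith)
  have hδ' : 1 ≤ β e + β (-e) := by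
    have h₂ : -β (-e) ≤ s₀ := by
      have := hαle _ _ hs₀
      rw [hαβ e heT] at this
      linarith
    linarith
  have hkey : e < Tm → β e + β (-e) ≤ 1 := by
    intro heTm
    have hstep : ∀ t, e < t → t ≤ Tm → β t + β (-t) < 1 := by
      intro t het htT
      by_contra hge
      push_neg at hge
      have htm : |t| ≤ Tm := abs_le.2 ⟨by linarith, htT⟩
      have htm' : |(-t)| ≤ Tm := by rwa [abs_neg]
      have htS : t ∈ S' := by
        refine ⟨-β (-t), negpair hKs (hβmem _ htm') rfl (by ring), ?_⟩
        exact slice_mem_between hKv (negpair hKs (hβmem _ htm') rfl (by ring)) (hβmem t htm)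
          (by linarith) (by linarith)
      have := (hS'le t htS).2
      linarith
    set A := β e + β (-e) with hA
    set B := β Tm + β (-Tm) with hB
    clear_value A B
    have hTmabs : |Tm| ≤ Tm := by rw [abs_of_nonneg hTm0]
    have hTmabs' : |(-Tm)| ≤ Tm := by rwa [abs_neg]
    have hn : ∀ n : ℕ, ((n:ℝ) + 1) * A + B ≤ (n:ℝ) + 2 := by
      intro n
      have hd : (0:ℝ) < (n:ℝ) + 2 := by positivity
      have ha : 0 ≤ ((n:ℝ) + 1) / ((n:ℝ) + 2) := by positivity
      have hb : 0 ≤ (1:ℝ) / ((n:ℝ) + 2) := by positivity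
      have hab : ((n:ℝ) + 1) / ((n:ℝ) + 2) + (1:ℝ) / ((n:ℝ) + 2) = 1 := by
        field_simp
        ring
      have h1 := hconc e Tm _ _ heT hTmabs ha hb hab
      have h2 := hconc (-e) (-Tm) _ _ (by rwa [abs_neg]) hTmabs' ha hb hab
      have hb' : (0:ℝ) < 1 / ((n:ℝ) + 2) := by positivity
      have hmt : ((n:ℝ) + 1) / ((n:ℝ) + 2) * -e + 1 / ((n:ℝ) + 2) * -Tm
          = -(((n:ℝ) + 1) / ((n:ℝ) + 2) * e + 1 / ((n:ℝ) + 2) * Tm) := by ring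
      rw [hmt] at h2
      have key1 : (((n:ℝ) + 1) / ((n:ℝ) + 2) * e + 1 / ((n:ℝ) + 2) * Tm) - e
          = 1 / ((n:ℝ) + 2) * (Tm - e) := by linear_combination (e:ℝ) * hab
      have key2 : Tm - (((n:ℝ) + 1) / ((n:ℝ) + 2) * e + 1 / ((n:ℝ) + 2) * Tm)
          = ((n:ℝ) + 1) / ((n:ℝ) + 2) * (Tm - e) := by linear_combination (-Tm:ℝ) * hab
      have het : e < ((n:ℝ) + 1) / ((n:ℝ) + 2) * e + 1 / ((n:ℝ) + 2) * Tm := by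
        nlinarith [mul_pos hb' (show (0:ℝ) < Tm - e by linarith)]
      have htT : ((n:ℝ) + 1) / ((n:ℝ) + 2) * e + 1 / ((n:ℝ) + 2) * Tm ≤ Tm := by
        nlinarith [mul_nonneg ha (show (0:ℝ) ≤ Tm - e by linarith)]
      have hlt := hstep _ het htT
      have hcomb : ((n:ℝ) + 1) / ((n:ℝ) + 2) * A + 1 / ((n:ℝ) + 2) * B < 1 := by
        rw [hA, hB]; linarith
      have := mul_lt_mul_of_pos_left hcomb hd
      calc ((n:ℝ) + 1) * A + B
          = ((n:ℝ) + 2) * (((n:ℝ) + 1) / ((n:ℝ) + 2) * A + 1 / ((n:ℝ) + 2) * B) := by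
            field_simp
        _ ≤ ((n:ℝ) + 2) * 1 := by linarith
        _ = (n:ℝ) + 2 := by ring
    by_contra hAgt
    push_neg at hAgt
    have hA1 : 0 < A - 1 := by linarith
    obtain ⟨n, hn'⟩ := exists_nat_gt ((1 - B) / (A - 1))
    have h1 : 1 - B < (n:ℝ) * (A - 1) := by rwa [div_lt_iff₀ hA1] at hn'
    have h2 := hn n
    nlinarith
  -- the two special points
  have haux : ∀ σ ρ s u : ℝ, (σ - (β e - 1), ρ - e) ∈ K → (σ - (-β e), ρ - (-e)) ∈ K →
      (s, u) ∈ K → (s + 1, u) ∈ K → σ - s ≤ β (ρ - u) := by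
    intro σ ρ s u h1 h2 hs hs1
    have hu := hS'le u ⟨s, hs, hs1⟩
    have hρe1 : |ρ - e| ≤ Tm := by have := hTle _ h1; simpa using this
    have hρe2 : |ρ + e| ≤ Tm := by have := hTle _ h2; simpa using this
    have huT : |u| ≤ Tm := by have := hTle _ hs; simpa using this
    have huT' : |(-u)| ≤ Tm := by rwa [abs_neg]
    have hαu : -β (-u) ≤ s := by
      have h' := hαle _ _ hs
      rw [hαβ u huT] at h'
      linarith
    have hβs : σ + β e ≤ β (ρ + e) := by
      have h' := hβle _ _ h2
      rw [show ρ - -e = ρ + e from by ring] at h'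
      linarith
    have hβs1 : σ - β e + 1 ≤ β (ρ - e) := by
      have := hβle _ _ h1
      linarith [this]
    have hsuff : σ ≤ β (ρ - u) - β (-u) → σ - s ≤ β (ρ - u) := fun h => by linarith
    apply hsuff
    rcases le_or_gt 0 ρ with hρ | hρ
    · have h4 := hfour (-u) (ρ + e) (ρ - u) e huT' hρe2 (by linarith [hu.1]) (by linarith [hu.2])
        (by linarith [hu.1]) (by linarith) (by ring)
      linarith
    · rcases eq_or_lt_of_le heT' with hET | hET
      · exfalso
        have := (abs_le.1 hρe1).1
        rw [← hET] at this
        linarith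
      · have hδ := hkey hET
        have h4 := hfour (ρ - e) (-u) (ρ - u) (-e) hρe1 huT' (by linarith [hu.2]) (by linarith)
          (by linarith) (by linarith [hu.1]) (by ring)
        linarith
  refine ⟨(β e - 1, e), (-β e, -e), ⟨hβe1, ?_⟩, ⟨negpair hKs hβe rfl rfl, ?_⟩, ?_⟩
  · have h3 : ((β e - 1 : ℝ), e) + (1, 0) = (β e, e) := Prod.ext (by simp) (by simp)
    rw [h3]; exact hβe
  · have h3 : ((-β e : ℝ), -e) + (1, 0) = (-(β e - 1), -e) := Prod.ext (by simp; ring) (by simp)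
    rw [h3]; exact negpair hKs hβe1 rfl rfl
  · rintro ⟨σ, ρ⟩ hκ₁ hκ₂ ⟨s, u⟩ hs hs1
    have hκ₁' : (σ - (β e - 1), ρ - e) ∈ K := hκ₁
    have hκ₂' : (σ - (-β e), ρ - (-e)) ∈ K := hκ₂
    have hs1' : (s + 1, u) ∈ K := by
      have h3 : ((s : ℝ), u) + (1, 0) = (s + 1, u) := Prod.ext (by simp) (by simp)
      rwa [h3] at hs1
    have up := haux σ ρ s u hκ₁' hκ₂' hs hs1'
    have lo := haux (-1 - σ) (-ρ) (-1 - s) (-u) (negpair hKs hκ₂' (by ring) (by ring))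
      (negpair hKs hκ₁' (by ring) (by ring)) (negpair hKs hs1' (by ring) rfl)
      (by
        have := negpair hKs hs (Eq.refl (-s)) (Eq.refl (-u))
        have h3 : ((-1 - s : ℝ) + 1, -u) = (-s, -u) := Prod.ext (by ring) rfl
        rwa [h3])
    -- lo : (-1 - σ) - (-1 - s) ≤ β (-ρ - -u)
    have lo' : s - σ ≤ β (-(ρ - u)) := by
      have h3 : (-1 - σ) - (-1 - s) = s - σ := by ring
      have h4 : (-ρ) - (-u) = -(ρ - u) := by ring
      rwa [h3, h4] at lo
    have hu := hS'le u ⟨s, hs, hs1'⟩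
    have hρe1 : |ρ - e| ≤ Tm := by have := hTle _ hκ₁'; simpa using this
    have hρe2 : |ρ + e| ≤ Tm := by have := hTle _ hκ₂'; simpa using this
    have hρu : |ρ - u| ≤ Tm := by
      rw [abs_le]
      constructor
      · linarith [(abs_le.1 hρe1).1, hu.2]
      · linarith [(abs_le.1 hρe2).2, hu.1]
    have hlow : α (ρ - u) ≤ σ - s := by
      rw [hαβ _ hρu]
      linarith
    show ((σ, ρ) - (s, u)) ∈ K
    have h3 : ((σ, ρ) - (s, u) : P2) = (σ - s, ρ - u) := rfl
    rw [h3]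
    exact slice_mem_between hKv (hαmem _ hρu) (hβmem _ hρu) hlow (by linarith)




lemma spindle_self_eq {C : Set P2} (hC : SymDisk C) (x : P2) :
    ∃ z₁ z₂ : P2, spindle C x x = tr C z₁ ∩ tr C z₂ := by
  obtain ⟨e, he⟩ := hC.1.extremePoints_nonempty ⟨0, zero_mem hC⟩
  have heC : e ∈ C := he.1
  have hxz₁ : x ∈ tr C (x - e) := mem_tr.2 (by simpa using heC)
  have hxz₂ : x ∈ tr C (x + e) := mem_tr.2 (by simpa using hC.2.2.2 _ heC)
  refine ⟨x - e, x + e, ?_⟩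
  apply Subset.antisymm
  · intro q hq
    simp only [spindle, mem_iInter, mem_setOf_eq] at hq
    exact ⟨hq _ ⟨hxz₁, hxz₁⟩, hq _ ⟨hxz₂, hxz₂⟩⟩
  · rintro q ⟨h₁, h₂⟩
    rw [mem_tr] at h₁ h₂
    -- h₁ : q - (x - e) ∈ C, h₂ : q - (x + e) ∈ C
    have h₂' : -(q - (x + e)) ∈ C := hC.2.2.2 _ h₂
    have hqx : q = x := by
      by_contra hne
      have hmem : e ∈ openSegment ℝ (q - (x - e)) (-(q - (x + e))) := by
        refine ⟨1/2, 1/2, by norm_num, by norm_num, by norm_num, ?_⟩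
        apply Prod.ext
        · simp only [Prod.smul_fst, Prod.fst_add, Prod.fst_sub, Prod.fst_neg, smul_eq_mul]
          ring
        · simp only [Prod.smul_snd, Prod.snd_add, Prod.snd_sub, Prod.snd_neg, smul_eq_mul]
          ring
      have := he.2 h₁ h₂' hmem
      -- q - (x - e) = e → q = x
      apply hne
      have h0 : q - x = 0 := by linear_combination this
      exact sub_eq_zero.1 h0
    subst hqx
    simp only [spindle, mem_iInter, mem_setOf_eq]
    exact fun z hz => hz.1

lemma symC {C : Set P2} (hC : SymDisk C) (v : P2) : v ∈ C ↔ -v ∈ C :=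
  ⟨fun hv => hC.2.2.2 _ hv, fun hv => by simpa using hC.2.2.2 _ hv⟩

lemma part2 {C : Set P2} (hC : SymDisk C) {x y : P2} (h : gauge C (x - y) ≤ 2)
    (hz : ∃ z : P2, spindle C x y = tr C z) : gauge C (x - y) = 2 := by
  obtain ⟨z, hz⟩ := hz
  by_contra hne
  have hlt : gauge C (x - y) < 2 := lt_of_le_of_ne h hne
  set u := (2⁻¹ : ℝ) • (x - y) with hu
  have hui : u ∈ interior C := half_mem_interior hC hlt
  have hCn : -C = C := by
    ext v
    rw [Set.mem_neg]
    exact (symC hC v).symm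
  have hui' : -u ∈ interior C := by
    have h1 : Neg.neg '' interior C = interior (Neg.neg '' C) :=
      (Homeomorph.neg P2).image_interior C
    have h2 : Neg.neg '' C = C := by
      ext v
      constructor
      · rintro ⟨c, hc, rfl⟩; exact (symC hC c).1 hc
      · intro hv; exact ⟨-v, (symC hC v).1 hv, neg_neg v⟩
    have h3 : -u ∈ Neg.neg '' interior C := ⟨u, hui, rfl⟩
    rwa [h1, h2] at h3
  set m := (2⁻¹ : ℝ) • (x + y) with hm
  have hxm : x - m = u := by
    apply Prod.ext
    · simp [hm, hu]; ring
    · simp [hm, hu]; ring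
  have hym : y - m = -u := by
    apply Prod.ext
    · simp [hm, hu]; ring
    · simp [hm, hu]; ring
  have hmc : m ∈ {w : P2 | x ∈ tr C w ∧ y ∈ tr C w} := by
    constructor
    · rw [mem_tr, hxm]; exact interior_subset hui
    · rw [mem_tr, hym]; exact interior_subset hui'
  obtain ⟨ε₁, hε₁, hb₁⟩ := Metric.isOpen_iff.1 isOpen_interior u hui
  obtain ⟨ε₂, hε₂, hb₂⟩ := Metric.isOpen_iff.1 isOpen_interior (-u) hui'
  set δ := min ε₁ ε₂ / 2 with hδ
  have hδ0 : 0 < δ := by positivity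
  set d : P2 := (δ, 0) with hd
  have hdn : ‖d‖ < min ε₁ ε₂ := by
    rw [hd, Prod.norm_def]
    simp only [norm_zero, Real.norm_eq_abs, abs_of_pos hδ0]
    rw [max_eq_left hδ0.le]
    rw [hδ]
    linarith [lt_min hε₁ hε₂]
  have hmc' : m - d ∈ {w : P2 | x ∈ tr C w ∧ y ∈ tr C w} := by
    constructor
    · rw [mem_tr]
      have : x - (m - d) = u + d := by rw [← hxm]; ring
      rw [this]
      apply interior_subset (hb₁ _)
      rw [Metric.mem_ball, dist_eq_norm]
      simpa using lt_of_lt_of_le hdn (min_le_left _ _)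
    · rw [mem_tr]
      have : y - (m - d) = -u + d := by rw [← hym]; ring
      rw [this]
      apply interior_subset (hb₂ _)
      rw [Metric.mem_ball, dist_eq_norm]
      simpa using lt_of_lt_of_le hdn (min_le_right _ _)
  have hzm : z = m := by
    apply tr_subset_eq hC.1 ⟨0, zero_mem hC⟩
    rw [← hz]
    exact biInter_subset_of_mem hmc
  have hzm' : z = m - d := by
    apply tr_subset_eq hC.1 ⟨0, zero_mem hC⟩
    rw [← hz]
    exact biInter_subset_of_mem hmc'
  have : d = 0 := by
    have := hzm ▸ hzm'
    -- m = m - d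
    have h0 : m - (m - d) = 0 := by rw [← this]; ring
    rw [show m - (m - d) = d from by ring] at h0
    exact h0
  rw [hd] at this
  have := congrArg Prod.fst this
  simp at this
  exact hδ0.ne' this

lemma part1_ne {C : Set P2} (hC : SymDisk C) {x y : P2} (h : gauge C (x - y) ≤ 2)
    (hxy : x ≠ y) : ∃ z₁ z₂ : P2, spindle C x y = tr C z₁ ∩ tr C z₂ := by
  set w := x - y with hw
  have hw0 : w ≠ 0 := sub_ne_zero.2 hxy
  have hn : 0 < w.1 ^ 2 + w.2 ^ 2 := by
    by_contra h'
    push_neg at h'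
    have h1 : w.1 = 0 := by nlinarith [sq_nonneg w.1, sq_nonneg w.2]
    have h2 : w.2 = 0 := by nlinarith [sq_nonneg w.1, sq_nonneg w.2]
    exact hw0 (Prod.ext h1 h2)
  have hnne : w.1 ^ 2 + w.2 ^ 2 ≠ 0 := hn.ne'
  set G : P2 → P2 := fun v =>
    ((v.1 * w.1 + v.2 * w.2) / (w.1 ^ 2 + w.2 ^ 2),
     (-v.1 * w.2 + v.2 * w.1) / (w.1 ^ 2 + w.2 ^ 2)) with hG
  set F : P2 → P2 := fun v => (v.1 * w.1 - v.2 * w.2, v.1 * w.2 + v.2 * w.1) with hF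
  have hFG : ∀ v, F (G v) = v := by
    intro v
    apply Prod.ext
    · show _ * w.1 - _ * w.2 = v.1
      simp only [hG]
      field_simp
      ring
    · show _ * w.2 + _ * w.1 = v.2
      simp only [hG]
      field_simp
      ring
  have hGF : ∀ v, G (F v) = v := by
    intro v
    apply Prod.ext
    · show (_ + _) / _ = v.1
      field_simp
      ring
    · show (_ + _) / _ = v.2
      field_simp
      ring
  have hGsub : ∀ a b : P2, G a - G b = G (a - b) := by
    intro a b
    apply Prod.ext
    · show _ / _ - _ / _ = _ / _
      simp only [Prod.fst_sub, Prod.snd_sub]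
      field_simp
      ring
    · show _ / _ - _ / _ = _ / _
      simp only [Prod.fst_sub, Prod.snd_sub]
      field_simp
      ring
  have hGadd : ∀ a b : P2, G (a + b) = G a + G b := by
    intro a b
    apply Prod.ext
    · show _ / _ = _ / _ + _ / _
      simp only [Prod.fst_add, Prod.snd_add]
      field_simp
      ring
    · show _ / _ = _ / _ + _ / _
      simp only [Prod.fst_add, Prod.snd_add]
      field_simp
      ring
  set K := G '' C with hK
  have hmemK : ∀ v, v ∈ C ↔ G v ∈ K := by
    intro v
    constructor
    · exact fun hv => ⟨v, hv, rfl⟩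
    · rintro ⟨c, hc, hcg⟩
      have : c = v := by
        have := congrArg F hcg
        rwa [hFG, hFG] at this
      exact this ▸ hc
  have hGcont : Continuous G := by
    rw [hG]
    apply Continuous.prodMk
    · exact ((continuous_fst.mul continuous_const).add
        (continuous_snd.mul continuous_const)).div_const _
    · exact ((continuous_fst.neg.mul continuous_const).add
        (continuous_snd.mul continuous_const)).div_const _
  have hKc : IsCompact K := hC.1.image hGcont
  have hKv : Convex ℝ K := by
    rintro p ⟨c₁, h₁, rfl⟩ q ⟨c₂, h₂, rfl⟩ a b ha hb hab
    refine ⟨a • c₁ + b • c₂, hC.2.1 h₁ h₂ ha hb hab, ?_⟩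
    apply Prod.ext
    · show _ / _ = (a • G c₁ + b • G c₂).1
      simp only [Prod.fst_add, Prod.smul_fst, smul_eq_mul, Prod.snd_add, Prod.smul_snd, hG]
      field_simp
      ring
    · show _ / _ = (a • G c₁ + b • G c₂).2
      simp only [Prod.fst_add, Prod.smul_fst, smul_eq_mul, Prod.snd_add, Prod.smul_snd, hG]
      field_simp
      ring
  have hKs : ∀ c ∈ K, -c ∈ K := by
    rintro p ⟨c, hc, rfl⟩
    refine ⟨-c, hC.2.2.2 _ hc, ?_⟩
    apply Prod.ext
    · show _ / _ = -(G c).1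
      simp only [Prod.fst_neg, Prod.snd_neg, hG]
      ring
    · show _ / _ = -(G c).2
      simp only [Prod.fst_neg, Prod.snd_neg, hG]
      ring
  have h0K : ((1:ℝ)/2, (0:ℝ)) ∈ K := by
    have hu : (2⁻¹ : ℝ) • w ∈ C := half_mem hC (hw ▸ h)
    refine ⟨(2⁻¹ : ℝ) • w, hu, ?_⟩
    apply Prod.ext
    · show _ / _ = 1/2
      simp only [Prod.smul_fst, Prod.smul_snd, smul_eq_mul]
      field_simp
    · show _ / _ = 0
      simp only [Prod.smul_fst, Prod.smul_snd, smul_eq_mul]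
      field_simp
      ring
  have hGw : G w = (1, 0) := by
    apply Prod.ext
    · show _ / _ = 1
      field_simp
    · show _ / _ = 0
      field_simp
      ring
  obtain ⟨ζ₁, ζ₂, ⟨hζ₁K, hζ₁K'⟩, ⟨hζ₂K, hζ₂K'⟩, hmain⟩ := main_K hKc hKv hKs h0K
  have hcenter : ∀ z : P2, (x ∈ tr C z ∧ y ∈ tr C z) ↔
      (G (z - x) ∈ K ∧ G (z - x) + (1, 0) ∈ K) := by
    intro z
    rw [mem_tr, mem_tr]
    constructor
    · rintro ⟨h1, h2⟩
      constructor
      · have : z - x ∈ C := by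
          have := hC.2.2.2 _ h1
          simpa using this
        exact (hmemK _).1 this
      · have hzy : z - y ∈ C := by
          have := hC.2.2.2 _ h2
          simpa using this
        have : G (z - y) ∈ K := (hmemK _).1 hzy
        rwa [show z - y = (z - x) + w from by rw [hw]; ring, hGadd, hGw] at this
    · rintro ⟨h1, h2⟩
      constructor
      · have : z - x ∈ C := (hmemK _).2 h1
        have := hC.2.2.2 _ this
        simpa using this
      · rw [← hGw, ← hGadd, show z - x + w = z - y from by rw [hw]; ring] at h2
        have : z - y ∈ C := (hmemK _).2 h2
        have := hC.2.2.2 _ this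
        simpa using this
  have hqmem : ∀ q z : P2, q ∈ tr C z ↔ G (q - x) - G (z - x) ∈ K := by
    intro q z
    rw [mem_tr, hGsub, show q - x - (z - x) = q - z from by ring, ← hmemK]
  refine ⟨x + F ζ₁, x + F ζ₂, ?_⟩
  have hc₁ : G (x + F ζ₁ - x) = ζ₁ := by rw [show x + F ζ₁ - x = F ζ₁ from by ring, hGF]
  have hc₂ : G (x + F ζ₂ - x) = ζ₂ := by rw [show x + F ζ₂ - x = F ζ₂ from by ring, hGF]
  have hz₁c : x ∈ tr C (x + F ζ₁) ∧ y ∈ tr C (x + F ζ₁) := by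
    rw [hcenter, hc₁]; exact ⟨hζ₁K, hζ₁K'⟩
  have hz₂c : x ∈ tr C (x + F ζ₂) ∧ y ∈ tr C (x + F ζ₂) := by
    rw [hcenter, hc₂]; exact ⟨hζ₂K, hζ₂K'⟩
  apply Subset.antisymm
  · intro p hp
    have hp' := mem_iInter₂.1 hp
    exact ⟨hp' _ hz₁c, hp' _ hz₂c⟩
  · rintro q ⟨hq₁, hq₂⟩
    have hκ₁ : G (q - x) - ζ₁ ∈ K := by
      have := (hqmem q _).1 hq₁
      rwa [hc₁] at this
    have hκ₂ : G (q - x) - ζ₂ ∈ K := by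
      have := (hqmem q _).1 hq₂
      rwa [hc₂] at this
    simp only [spindle, mem_iInter, mem_setOf_eq]
    intro z hzc
    rw [hqmem]
    exact hmain _ hκ₁ hκ₂ _ ((hcenter z).1 hzc).1 ((hcenter z).1 hzc).2

theorem stmt9 (C : Set P2) (hC : SymDisk C) (x y : P2) (h : gauge C (x - y) ≤ 2) :
    (∃ z₁ z₂ : P2, spindle C x y = tr C z₁ ∩ tr C z₂) ∧
      ((∃ z : P2, spindle C x y = tr C z) → gauge C (x - y) = 2) := by
  constructor
  · rcases eq_or_ne x y with rfl | hxy
    · exact spindle_self_eq hC x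
    · exact part1_ne hC h hxy
  · intro hz
    exact part2 hC h hz
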